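/- Let M ≥ 1 and let U : ℕ → Matrix (Fin M) (Fin M) ℂ be a family of matrices. Define recursively F : ℕ → ℕ → Matrix, where F k x is indexed by Fin (2^k) × Fin M: F 0 x = U x (identifying Fin 1 × Fin M with Fin M), and F (k+1) x is, under the identification Fin (2^{k+1}) ≃ Fin 2 × Fin (2^k) sending j to (⌊j / 2^k⌋, j mod 2^k) (most significant bit first), the block-diagonal matrix |0⟩⟨0| ⊗ F k (2x) + |1⟩⟨1| ⊗ F k (2x+1). Then for every n, j, j' ∈ Fin (2^n) and r, s ∈ Fin M, (F n 0) ((j,r),(j',s)) = U j r s if j = j' and 0 otherwise. That is, the recursive quantum multiplexor program — where each qif statement on control qubit q[k] branches to P(k−1, 2x) and P(k−1, 2x+1) and the base case calls the program for U_x — implements the quantum multiplexor ∑_{x ∈ [2^n]} |x⟩⟨x| ⊗ U_x. -/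

import Mathlib

/-- The matrix described by the recursive quantum multiplexor program:
`F 0 x = U x`, and `F (k+1) x`, under the identification
`Fin (2^(k+1)) ≃ Fin 2 × Fin (2^k)` sending `j` to `(j / 2^k, j % 2^k)` (most
significant bit first), is the block-diagonal matrix
`|0⟩⟨0| ⊗ F k (2x) + |1⟩⟨1| ⊗ F k (2x+1)`. -/
def muxRec (M : ℕ) (U : ℕ → Matrix (Fin M) (Fin M) ℂ) :
    (k : ℕ) → ℕ → Matrix (Fin (2 ^ k) × Fin M) (Fin (2 ^ k) × Fin M) ℂ
  | 0, x => Matrix.of fun p q => U x p.2 q.2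
  | k + 1, x => Matrix.of fun p q =>
      if (p.1 : ℕ) / 2 ^ k = (q.1 : ℕ) / 2 ^ k then
        muxRec M U k (if (p.1 : ℕ) / 2 ^ k = 0 then 2 * x else 2 * x + 1)
          (⟨(p.1 : ℕ) % 2 ^ k, Nat.mod_lt _ (Nat.pow_pos (by norm_num))⟩, p.2)
          (⟨(q.1 : ℕ) % 2 ^ k, Nat.mod_lt _ (Nat.pow_pos (by norm_num))⟩, q.2)
      else 0

theorem muxRec_general (M : ℕ) (U : ℕ → Matrix (Fin M) (Fin M) ℂ) :
    ∀ (k : ℕ) (x : ℕ) (j j' : Fin (2 ^ k)) (r s : Fin M),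
      muxRec M U k x (j, r) (j', s) = if j = j' then U (2 ^ k * x + j) r s else 0
  | 0, x, j, j', r, s => by
    have : j = j' := Fin.ext (by omega)
    simp [muxRec, this]
  | k + 1, x, j, j', r, s => by
    have hp : 2 ^ (k + 1) = 2 ^ k * 2 := pow_succ 2 k
    have hjb := j.2
    have hj'b := j'.2
    have hdj := Nat.div_add_mod (j : ℕ) (2 ^ k)
    have hdj' := Nat.div_add_mod (j' : ℕ) (2 ^ k)
    have hpk : 0 < 2 ^ k := Nat.pow_pos (by norm_num)
    simp only [muxRec, Matrix.of_apply]
    split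
    · rename_i h
      have hdd : 2 ^ k * ((j : ℕ) / 2 ^ k) = 2 ^ k * ((j' : ℕ) / 2 ^ k) := by rw [h]
      have hx1 : 2 ^ (k + 1) * x = 2 ^ k * (2 * x) := by rw [hp]; ring
      have hx2 : 2 ^ k * (2 * x + 1) = 2 ^ (k + 1) * x + 2 ^ k := by rw [hp]; ring
      rw [muxRec_general M U k]
      have hjj : (j = j') ↔ ((⟨(j : ℕ) % 2 ^ k, Nat.mod_lt _ hpk⟩ : Fin (2^k)) = ⟨(j' : ℕ) % 2 ^ k, Nat.mod_lt _ hpk⟩) := by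
        constructor
        · rintro rfl; rfl
        · intro h2
          have h3 : (j : ℕ) % 2 ^ k = (j' : ℕ) % 2 ^ k := congrArg Fin.val h2
          exact Fin.ext (by omega)
      have harg : 2 ^ k * (if (j : ℕ) / 2 ^ k = 0 then 2 * x else 2 * x + 1) + (j : ℕ) % 2 ^ k = 2 ^ (k+1) * x + j := by
        split <;> rename_i h0
        · have hz : 2 ^ k * ((j : ℕ) / 2 ^ k) = 0 := by rw [h0]; ring
          omega
        · have h1 : (j : ℕ) / 2 ^ k = 1 := by
            have h2 : (j : ℕ) / 2 ^ k < 2 := Nat.div_lt_of_lt_mul (hp ▸ hjb)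
            exact Nat.le_antisymm (Nat.lt_succ_iff.mp h2) (Nat.one_le_iff_ne_zero.mpr h0)
          have ho : 2 ^ k * ((j : ℕ) / 2 ^ k) = 2 ^ k := by rw [h1]; ring
          omega
      rw [harg]
      by_cases hje : j = j'
      · subst hje
        rw [if_pos (hjj.mp rfl), if_pos rfl]
      · rw [if_neg hje, if_neg (fun h2 => hje (hjj.mpr h2))]
    · rename_i h
      rw [if_neg]
      intro hje; exact h (by rw [hje])

/-- The recursive quantum multiplexor program — where each qif statement on control
qubit `q[k]` branches to `P(k−1, 2x)` and `P(k−1, 2x+1)` and the base case calls the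
program for `U_x` — implements the quantum multiplexor `∑_{x ∈ [2^n]} |x⟩⟨x| ⊗ U_x`. -/
theorem muxRec_correct (M : ℕ) (hM : 1 ≤ M) (U : ℕ → Matrix (Fin M) (Fin M) ℂ)
    (n : ℕ) (j j' : Fin (2 ^ n)) (r s : Fin M) :
    muxRec M U n 0 (j, r) (j', s) = if j = j' then U j r s else 0 := by
  rw [muxRec_general]
  simp
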